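/- For every positive integer m, the formal power series (1 - q^{m+1}) / ((1-q^2)(1-q^3)) has nonnegative coefficients. -/

import Mathlib

/-- The coefficient of `q^n` in `1/((1-q^2)(1-q^3)) = ∑_{i,j≥0} q^{2i+3j}`:
the number of pairs `(i,j)` of nonnegative integers with `2i+3j = n`. -/
def r23 (n : ℕ) : ℕ :=
  ((Finset.range (n + 1) ×ˢ Finset.range (n + 1)).filter
    (fun p => 2 * p.1 + 3 * p.2 = n)).card

lemma r23_le_add (n a b : ℕ) : r23 n ≤ r23 (n + (2 * a + 3 * b)) := by
  unfold r23
  apply Finset.card_le_card_of_injOn (fun p => (p.1 + a, p.2 + b))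
  · intro p hp
    simp only [Finset.mem_coe, Finset.mem_filter, Finset.mem_product, Finset.mem_range] at hp ⊢
    omega
  · intro p _ q _ h
    simp only [Prod.mk.injEq] at h
    ext <;> omega

lemma rep (k : ℕ) (hk : 2 ≤ k) : ∃ a b, k = 2 * a + 3 * b := by
  rcases Nat.even_or_odd k with ⟨c, hc⟩ | ⟨c, hc⟩
  · exact ⟨c, 0, by omega⟩
  · exact ⟨c - 1, 1, by omega⟩

/-- The coefficient of `q^n` in `(1-q^{m+1})/((1-q^2)(1-q^3))`, namely
`r23 n - r23 (n - (m+1))`, is nonnegative for every positive integer `m`. -/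
theorem coeff_nonneg_one_sub_qm (m : ℕ) (hm : 1 ≤ m) (n : ℕ) :
    (if m + 1 ≤ n then r23 (n - (m + 1)) else 0) ≤ r23 n := by
  split_ifs with h
  · obtain ⟨a, b, hab⟩ := rep (m + 1) (by omega)
    have := r23_le_add (n - (m + 1)) a b
    have hn : n - (m + 1) + (2 * a + 3 * b) = n := by omega
    rwa [hn] at this
  · exact Nat.zero_le _
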